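/- Let G = (V,E) be a finite simple graph with positive edge weights (θ_e)_{e∈E}, and for z > 0 let y(z) ∈ (0,∞)^{E⃗} be the unique solution of y_{u→v}(z) = z / (1 + ∑_{w ∈ ∂u∖{v}} θ_{wu} y_{w→u}(z)) for all directed edges u→v, and define x_e(z) = θ_e y_{u→v}(z) y_{v→u}(z) / (z + θ_e y_{u→v}(z) y_{v→u}(z)) for each edge e = (uv). Then for every edge e = (uv) and every z > 0, x_e(z)(1 − x_e(z)) / z = θ_e · (1 − ∑_{e' ∋ u} x_{e'}(z)) · (1 − ∑_{e' ∋ v} x_{e'}(z)). -/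

import Mathlib

open Finset
open scoped BigOperators Classical

noncomputable section

/-- The finite set of edges of a graph on a finite vertex type. -/
def edgeFS {V : Type*} [Fintype V] (G : SimpleGraph V) : Finset (Sym2 V) :=
  (Set.toFinite G.edgeSet).toFinset

/-- The finite set of neighbours of a vertex. -/
def nbrFS {V : Type*} [Fintype V] (G : SimpleGraph V) (u : V) : Finset V :=
  (Set.toFinite (G.neighborSet u)).toFinset

/-- `M` is (the edge set of) a matching of `G`: a set of pairwise disjoint edges. -/
def IsMatchingF {V : Type*} (G : SimpleGraph V) (M : Finset (Sym2 V)) : Prop :=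
  (↑M ⊆ G.edgeSet) ∧ ∀ e ∈ M, ∀ f ∈ M, e ≠ f → ∀ v : V, v ∈ e → v ∉ f

/-- The weighted matching count `w_k(G) = ∑_{M matching, |M| = k} ∏_{e ∈ M} θ_e`. -/
def wCount {V : Type*} [Fintype V] (G : SimpleGraph V) (θ : Sym2 V → ℝ) (k : ℕ) : ℝ :=
  ∑ M ∈ Finset.univ.filter
      (fun M : Finset (Sym2 V) => IsMatchingF G M ∧ M.card = k),
    ∏ e ∈ M, θ e

/-- The matching number `ν(G) = max {k | w_k(G) > 0}`. -/
def nuW {V : Type*} [Fintype V] (G : SimpleGraph V) (θ : Sym2 V → ℝ) : ℕ :=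
  sSup {k : ℕ | 0 < wCount G θ k}

/-- The weighted matching generating function `P_G(z) = ∑_{k=0}^{ν(G)} w_k(G) z^k`. -/
def PW {V : Type*} [Fintype V] (G : SimpleGraph V) (θ : Sym2 V → ℝ) (z : ℝ) : ℝ :=
  ∑ k ∈ Finset.range (nuW G θ + 1), wCount G θ k * z ^ k

/-- `incSum G x v = ∑_{e ∋ v} x_e`. -/
def incSum {V : Type*} [Fintype V] (G : SimpleGraph V) (x : Sym2 V → ℝ) (v : V) : ℝ :=
  ∑ e ∈ (edgeFS G).filter (fun e => v ∈ e), x e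

/-- Membership in the fractional matching polytope `FM(G)`. -/
def memFM {V : Type*} [Fintype V] (G : SimpleGraph V) (x : Sym2 V → ℝ) : Prop :=
  (∀ e ∈ edgeFS G, 0 ≤ x e) ∧ ∀ v : V, incSum G x v ≤ 1

/-- The fractional matching number `ν*(G) = max_{x ∈ FM(G)} ∑_e x_e`. -/
def nuStar {V : Type*} [Fintype V] (G : SimpleGraph V) : ℝ :=
  sSup {r : ℝ | ∃ x : Sym2 V → ℝ, memFM G x ∧ r = ∑ e ∈ edgeFS G, x e}

/-- The weighted Bethe entropy `S^B_G(x)` (with the convention `0 · ln 0 = 0`, which holds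
since `Real.log 0 = 0`). -/
def SBW {V : Type*} [Fintype V] (G : SimpleGraph V) (θ x : Sym2 V → ℝ) : ℝ :=
  (∑ e ∈ edgeFS G, (x e * Real.log (θ e / x e) + (1 - x e) * Real.log (1 - x e)))
  - ∑ v : V, (1 - incSum G x v) * Real.log (1 - incSum G x v)

/-- `y : V × V → ℝ` is a (positive) solution on directed edges of the message recursion
`y_{u→v} = z / (1 + ∑_{w ∈ ∂u∖{v}} θ_{wu} y_{w→u})`. -/
def MsgFP {V : Type*} [Fintype V] (G : SimpleGraph V) (θ : Sym2 V → ℝ) (z : ℝ)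
    (y : V × V → ℝ) : Prop :=
  ∀ u v : V, G.Adj u v →
    0 < y (u, v) ∧
    y (u, v) = z / (1 + ∑ w ∈ (nbrFS G u).erase v, θ s(w, u) * y (w, u))


lemma mem_nbrFS {V : Type*} [Fintype V] {G : SimpleGraph V} {u w : V} :
    w ∈ nbrFS G u ↔ G.Adj u w := by
  simp [nbrFS]

lemma incSum_eq {V : Type*} [Fintype V] (G : SimpleGraph V) (x : Sym2 V → ℝ) (u : V) :
    incSum G x u = ∑ w ∈ nbrFS G u, x s(u, w) := by
  rw [incSum,
    show (edgeFS G).filter (fun e => u ∈ e) = (nbrFS G u).image (fun w => s(u, w)) from ?_]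
  · rw [Finset.sum_image]
    intro a ha b hb hab
    exact Sym2.congr_right.mp hab
  · ext e
    simp only [Finset.mem_filter, Finset.mem_image, edgeFS, Set.Finite.mem_toFinset]
    constructor
    · rintro ⟨he, hue⟩
      induction e using Sym2.inductionOn with
      | hf a b =>
        rw [SimpleGraph.mem_edgeSet] at he
        rcases Sym2.mem_iff.mp hue with rfl | rfl
        · exact ⟨b, mem_nbrFS.mpr he, rfl⟩
        · exact ⟨a, mem_nbrFS.mpr he.symm, Sym2.eq_swap⟩
    · rintro ⟨w, hw, rfl⟩
      exact ⟨(SimpleGraph.mem_edgeSet G).mpr (mem_nbrFS.mp hw), Sym2.mem_mk_left u w⟩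

/-- The local identity satisfied by the BP marginals: for every edge
`e = (uv)` and `z > 0`,
`x_e(z)(1 − x_e(z))/z = θ_e (1 − ∑_{e' ∋ u} x_{e'}(z)) (1 − ∑_{e' ∋ v} x_{e'}(z))`. -/
theorem bp_marginals_local_identity {V : Type*} [Fintype V] (G : SimpleGraph V)
    (θ : Sym2 V → ℝ) (hθ : ∀ e ∈ G.edgeSet, 0 < θ e)
    (y : ℝ → V × V → ℝ) (hy : ∀ z : ℝ, 0 < z → MsgFP G θ z (y z))
    (x : ℝ → Sym2 V → ℝ)
    (hx : ∀ z : ℝ, 0 < z → ∀ u v : V, G.Adj u v →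
      x z s(u, v) = θ s(u, v) * y z (u, v) * y z (v, u)
        / (z + θ s(u, v) * y z (u, v) * y z (v, u))) :
    ∀ z : ℝ, 0 < z → ∀ u v : V, G.Adj u v →
      x z s(u, v) * (1 - x z s(u, v)) / z
        = θ s(u, v) * (1 - incSum G (x z) u) * (1 - incSum G (x z) v) := by
  intro z hz u v huv
  -- notation
  set Y : V × V → ℝ := y z with hY
  have hpos : ∀ a b : V, G.Adj a b → 0 < Y (a, b) := fun a b h => ((hy z hz) a b h).1
  set S : V → ℝ := fun a => 1 + ∑ w ∈ nbrFS G a, θ s(w, a) * Y (w, a) with hS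
  have hsum_nonneg : ∀ a : V, 0 ≤ ∑ w ∈ nbrFS G a, θ s(w, a) * Y (w, a) := by
    intro a
    refine Finset.sum_nonneg fun w hw => ?_
    have hadj : G.Adj a w := mem_nbrFS.mp hw
    exact le_of_lt (mul_pos (hθ _ ((SimpleGraph.mem_edgeSet G).mpr hadj.symm)) (hpos w a hadj.symm))
  have hSpos : ∀ a : V, 0 < S a := fun a => by
    have := hsum_nonneg a; simp only [hS]; linarith
  -- key identity: z + θ y y = y * S
  have key1 : ∀ a b : V, G.Adj a b →
      z + θ s(a, b) * Y (a, b) * Y (b, a) = Y (a, b) * S a := by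
    intro a b hab
    obtain ⟨hYpos, hYeq⟩ := (hy z hz) a b hab
    set T : ℝ := ∑ w ∈ (nbrFS G a).erase b, θ s(w, a) * Y (w, a) with hT
    have hTnonneg : 0 ≤ T := by
      refine Finset.sum_nonneg fun w hw => ?_
      have hadj : G.Adj a w := mem_nbrFS.mp (Finset.mem_of_mem_erase hw)
      exact le_of_lt (mul_pos (hθ _ ((SimpleGraph.mem_edgeSet G).mpr hadj.symm)) (hpos w a hadj.symm))
    have h1T : (0:ℝ) < 1 + T := by linarith
    have hz' : z = Y (a, b) * (1 + T) := by
      have : Y (a, b) = z / (1 + T) := hYeq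
      rw [this]; field_simp
    have hb : b ∈ nbrFS G a := mem_nbrFS.mpr hab
    have hsplit : S a = 1 + T + θ s(b, a) * Y (b, a) := by
      have := Finset.sum_erase_add (nbrFS G a) (fun w => θ s(w, a) * Y (w, a)) hb
      simp only [hS]
      rw [← this]
      ring
    have hswap : s(b, a) = s(a, b) := Sym2.eq_swap
    rw [hsplit, hz', hswap]
    ring
  -- 1 - incSum = 1 / S
  have key2 : ∀ a : V, 1 - incSum G (x z) a = 1 / S a := by
    intro a
    have hterm : ∀ w ∈ nbrFS G a, x z s(a, w) = θ s(w, a) * Y (w, a) / S a := by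
      intro w hw
      have hadj : G.Adj a w := mem_nbrFS.mp hw
      have hYne : Y (a, w) ≠ 0 := ne_of_gt (hpos a w hadj)
      have hSne : S a ≠ 0 := ne_of_gt (hSpos a)
      rw [hx z hz a w hadj, key1 a w hadj]
      rw [show s(w, a) = s(a, w) from Sym2.eq_swap]
      field_simp
      ring
    rw [incSum_eq, Finset.sum_congr rfl hterm, ← Finset.sum_div]
    have hSne : S a ≠ 0 := ne_of_gt (hSpos a)
    have : ∑ w ∈ nbrFS G a, θ s(w, a) * Y (w, a) = S a - 1 := by simp [hS]
    rw [this]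
    field_simp
    ring
  -- finish
  have h1 := key1 u v huv
  have h2 := key1 v u huv.symm
  rw [show s(v, u) = s(u, v) from Sym2.eq_swap] at h2
  have h2' : z + θ s(u, v) * Y (u, v) * Y (v, u) = Y (v, u) * S v := by
    rw [← h2]; ring
  set a : ℝ := θ s(u, v) * Y (u, v) * Y (v, u) with ha
  have hapos : 0 < a :=
    mul_pos (mul_pos (hθ _ ((SimpleGraph.mem_edgeSet G).mpr huv)) (hpos u v huv)) (hpos v u huv.symm)
  have hzane : z + a ≠ 0 := by positivity
  rw [hx z hz u v huv, key2 u, key2 v]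
  have hSu : S u ≠ 0 := ne_of_gt (hSpos u)
  have hSv : S v ≠ 0 := ne_of_gt (hSpos v)
  have hYu : Y (u, v) ≠ 0 := ne_of_gt (hpos u v huv)
  have hYv : Y (v, u) ≠ 0 := ne_of_gt (hpos v u huv.symm)
  have hzne : z ≠ 0 := ne_of_gt hz
  have hLHS : a / (z + a) * (1 - a / (z + a)) / z = a / (z + a) ^ 2 := by
    field_simp
    ring
  rw [← ha, hLHS, h1]
  have : (Y (u, v) * S u) ^ 2 = (Y (u, v) * S u) * (Y (v, u) * S v) := by
    rw [← h1, ← h2']; ring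
  rw [this, ha]
  field_simp
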